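/- Let F be a finite field with q elements and let ψ be a nontrivial additive character of F with values in ℂ. Then Σ_{t ∈ Fˣ} Σ_{A ∈ M₃(F)} ψ(t⁻¹·det A + t) = q⁴(1 − q² − q³). -/

import Mathlib

open Finset Matrix

private lemma upd_upd12 {F : Type*} {m n : Type*} [DecidableEq m]
    (A : Matrix m n F) (i : m) (v w : n → F) :
    (A.updateRow i v).updateRow i w = A.updateRow i w := by
  ext j k
  rcases eq_or_ne j i with rfl | h
  · simp [Matrix.updateRow_self]
  · simp [Matrix.updateRow_ne h]

/-- scaling row 0 by a unit, as an equiv of the matrix space -/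
private def rowScale12 {F : Type*} [Field F] (t : Fˣ) :
    Matrix (Fin 3) (Fin 3) F ≃ Matrix (Fin 3) (Fin 3) F where
  toFun A := A.updateRow 0 ((t : F) • A 0)
  invFun A := A.updateRow 0 (((t⁻¹ : Fˣ) : F) • A 0)
  left_inv A := by
    show ((A.updateRow 0 ((t : F) • A 0)).updateRow 0
      (((t⁻¹ : Fˣ) : F) • (A.updateRow 0 ((t : F) • A 0)) 0)) = A
    rw [Matrix.updateRow_self, smul_smul, Units.val_inv_eq_inv_val,
      inv_mul_cancel₀ t.ne_zero, one_smul, upd_upd12, Matrix.updateRow_eq_self]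
  right_inv A := by
    show ((A.updateRow 0 (((t⁻¹ : Fˣ) : F) • A 0)).updateRow 0
      ((t : F) • (A.updateRow 0 (((t⁻¹ : Fˣ) : F) • A 0)) 0)) = A
    rw [Matrix.updateRow_self, smul_smul, Units.val_inv_eq_inv_val,
      mul_inv_cancel₀ t.ne_zero, one_smul, upd_upd12, Matrix.updateRow_eq_self]

private def fibEquiv12 {F : Type*} [Field F] (c : F) (hc : c ≠ 0) :
    {A : Matrix (Fin 3) (Fin 3) F // A.det = c} ≃ {A : Matrix (Fin 3) (Fin 3) F // A.det = 1} where
  toFun A := ⟨A.1.updateRow 0 (c⁻¹ • A.1 0), by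
    rw [Matrix.det_updateRow_smul, Matrix.updateRow_eq_self, A.2, inv_mul_cancel₀ hc]⟩
  invFun A := ⟨A.1.updateRow 0 (c • A.1 0), by
    rw [Matrix.det_updateRow_smul, Matrix.updateRow_eq_self, A.2, mul_one]⟩
  left_inv A := by
    ext1
    show ((A.1.updateRow 0 (c⁻¹ • A.1 0)).updateRow 0
      (c • (A.1.updateRow 0 (c⁻¹ • A.1 0)) 0)) = A.1
    rw [Matrix.updateRow_self, smul_smul, mul_inv_cancel₀ hc, one_smul, upd_upd12,
      Matrix.updateRow_eq_self]
  right_inv A := by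
    ext1
    show ((A.1.updateRow 0 (c • A.1 0)).updateRow 0
      (c⁻¹ • (A.1.updateRow 0 (c • A.1 0)) 0)) = A.1
    rw [Matrix.updateRow_self, smul_smul, inv_mul_cancel₀ hc, one_smul, upd_upd12,
      Matrix.updateRow_eq_self]

/-- decompose a nonsingular matrix as (det, unimodular part) -/
private def nzEquiv12 {F : Type*} [Field F] :
    {A : Matrix (Fin 3) (Fin 3) F // A.det ≠ 0} ≃
      {c : F // c ≠ 0} × {A : Matrix (Fin 3) (Fin 3) F // A.det = 1} where
  toFun A := ⟨⟨A.1.det, A.2⟩, ⟨A.1.updateRow 0 ((A.1.det)⁻¹ • A.1 0), by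
    rw [Matrix.det_updateRow_smul, Matrix.updateRow_eq_self, inv_mul_cancel₀ A.2]⟩⟩
  invFun p := ⟨p.2.1.updateRow 0 ((p.1.1 : F) • p.2.1 0), by
    rw [Matrix.det_updateRow_smul, Matrix.updateRow_eq_self, p.2.2, mul_one]
    exact p.1.2⟩
  left_inv A := by
    ext1
    show ((A.1.updateRow 0 ((A.1.det)⁻¹ • A.1 0)).updateRow 0
      (A.1.det • (A.1.updateRow 0 ((A.1.det)⁻¹ • A.1 0)) 0)) = A.1
    rw [Matrix.updateRow_self, smul_smul, mul_inv_cancel₀ A.2, one_smul, upd_upd12,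
      Matrix.updateRow_eq_self]
  right_inv p := by
    obtain ⟨⟨c, hc⟩, ⟨B, hB⟩⟩ := p
    have hdet : ((B.updateRow 0 (c • B 0)).det) = c := by
      rw [Matrix.det_updateRow_smul, Matrix.updateRow_eq_self, hB, mul_one]
    refine Prod.ext (Subtype.ext ?_) (Subtype.ext ?_)
    · exact hdet
    · show ((B.updateRow 0 (c • B 0)).updateRow 0
        (((B.updateRow 0 (c • B 0)).det)⁻¹ • (B.updateRow 0 (c • B 0)) 0)) = B
      rw [hdet, Matrix.updateRow_self, smul_smul, inv_mul_cancel₀ hc, one_smul, upd_upd12,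
        Matrix.updateRow_eq_self]

private def glEquiv12 {F : Type*} [Field F] [Fintype F] [DecidableEq F] :
    GL (Fin 3) F ≃ {A : Matrix (Fin 3) (Fin 3) F // A.det ≠ 0} where
  toFun M := ⟨(M : Matrix (Fin 3) (Fin 3) F), by
    have h : IsUnit ((M : Matrix (Fin 3) (Fin 3) F)).det :=
      (Matrix.isUnit_iff_isUnit_det _).mp M.isUnit
    exact h.ne_zero⟩
  invFun A := Matrix.GeneralLinearGroup.mkOfDetNeZero A.1 A.2
  left_inv M := Units.ext rfl
  right_inv A := rfl

set_option maxHeartbeats 1000000 in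
/-- For a nontrivial additive character `ψ` of a finite field `F` with `q` elements,
`∑_{t ∈ Fˣ} ∑_{A ∈ M₃(F)} ψ(t⁻¹·det A + t) = q⁴(1 − q² − q³)`. -/
theorem stmt_12 (F : Type*) [Field F] [Fintype F] [DecidableEq F] (q : ℕ) (hq : Fintype.card F = q)
    (ψ : AddChar F ℂ) (hψ : ∃ a : F, ψ a ≠ 1) :
    ∑ t : Fˣ, ∑ A : Matrix (Fin 3) (Fin 3) F,
        ψ (((t⁻¹ : Fˣ) : F) * A.det + (t : F)) =
      (q : ℂ) ^ 4 * (1 - (q : ℂ) ^ 2 - (q : ℂ) ^ 3) := by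
  classical
  obtain ⟨a, ha⟩ := hψ
  have hψ1 : ψ ≠ 1 := fun h => ha (by rw [h]; rfl)
  have h0 : ∑ x : F, ψ x = 0 := AddChar.sum_eq_zero_of_ne_one hψ1
  -- the sum over units
  have herase : ∑ x ∈ Finset.univ.erase (0:F), ψ x = -1 := by
    rw [Finset.sum_erase_eq_sub (Finset.mem_univ _), h0, AddChar.map_zero_eq_one]; ring
  have hunits : ∑ t : Fˣ, ψ (t : F) = -1 := by
    have he : ∑ t : Fˣ, ψ (t : F) = ∑ a : {a : F // a ≠ 0}, ψ a.1 :=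
      Equiv.sum_comp unitsEquivNeZero (fun a : {a : F // a ≠ 0} => ψ a.1)
    have h2 : ∑ x ∈ Finset.univ.erase (0:F), ψ x = ∑ a : {a : F // a ≠ 0}, ψ a.1 :=
      Finset.sum_subtype _ (by simp) _
    rw [he, ← h2, herase]
  -- fiber cardinalities
  set N : F → ℕ := fun c => Fintype.card {A : Matrix (Fin 3) (Fin 3) F // A.det = c} with hN
  have hNc : ∀ c : F, c ≠ 0 → N c = N 1 := fun c hc => Fintype.card_congr (fibEquiv12 c hc)
  have hq2 : 2 ≤ q := hq ▸ Fintype.one_lt_card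
  -- card of matrices
  have hcardM : Fintype.card (Matrix (Fin 3) (Fin 3) F) = q ^ 9 := by
    simp [Matrix, Fintype.card_fun, hq]
    erw [Fintype.card_fun, Fintype.card_fun, hq]; simp; ring
  have hfib : q ^ 9 = ∑ c : F, N c := by
    rw [← hcardM, ← Fintype.card_sigma]
    exact Fintype.card_congr (Equiv.sigmaFiberEquiv (fun A : Matrix (Fin 3) (Fin 3) F => A.det)).symm
  have hsplit : (∑ c : F, N c) = N 0 + (q - 1) * N 1 := by
    rw [← Finset.add_sum_erase _ _ (Finset.mem_univ (0:F))]
    congr 1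
    rw [Finset.sum_congr rfl (fun c hc => hNc c (Finset.ne_of_mem_erase hc)),
      Finset.sum_const, smul_eq_mul, Finset.card_erase_of_mem (Finset.mem_univ _),
      Finset.card_univ, hq]
  -- GL card
  have hGL : (q - 1) * N 1 = ∏ i : Fin 3, (q ^ 3 - q ^ (i : ℕ)) := by
    have h1 : Fintype.card {A : Matrix (Fin 3) (Fin 3) F // A.det ≠ 0} = (q - 1) * N 1 := by
      rw [Fintype.card_congr (nzEquiv12 (F := F)), Fintype.card_prod]
      congr 1
      rw [Fintype.card_congr (unitsEquivNeZero (G₀ := F)).symm, Fintype.card_units, hq]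
    have h2 : Fintype.card {A : Matrix (Fin 3) (Fin 3) F // A.det ≠ 0} =
        Nat.card (GL (Fin 3) F) := by
      rw [Nat.card_eq_fintype_card]
      exact Fintype.card_congr (glEquiv12 (F := F)).symm
    rw [← h1, h2, Matrix.card_GL_field, hq]
  -- value of N 1
  have hq1 : (1:ℕ) ≤ q := le_trans (by norm_num) hq2
  have hN1 : N 1 = q ^ 2 * ((q ^ 3 - 1) * (q ^ 3 - q)) := by
    have hpos : 0 < q - 1 := by omega
    apply Nat.eq_of_mul_eq_mul_left hpos
    rw [hGL, Fin.prod_univ_three]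
    have h32 : q ^ 3 - q ^ 2 = (q - 1) * q ^ 2 := by
      rw [Nat.sub_mul, one_mul, ← pow_succ']
    show (q ^ 3 - q ^ 0) * (q ^ 3 - q ^ 1) * (q ^ 3 - q ^ 2) = _
    rw [pow_zero, pow_one, h32]
    generalize (q ^ 3 - 1) = x
    generalize (q ^ 3 - q) = y
    ring
  -- the character sum over determinants
  set S : ℂ := ∑ A : Matrix (Fin 3) (Fin 3) F, ψ A.det with hS
  have hSval : S = (N 0 : ℂ) - (N 1 : ℂ) := by
    rw [hS, ← Fintype.sum_fiberwise' (fun A : Matrix (Fin 3) (Fin 3) F => A.det) (fun c => ψ c)]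
    have : ∀ c : F, (∑ _A : {A : Matrix (Fin 3) (Fin 3) F // A.det = c}, ψ c) = (N c : ℂ) * ψ c := by
      intro c
      rw [Finset.sum_const, Finset.card_univ, nsmul_eq_mul]
    rw [Finset.sum_congr rfl (fun c _ => this c),
      ← Finset.add_sum_erase _ _ (Finset.mem_univ (0:F)), AddChar.map_zero_eq_one, mul_one]
    have : ∀ c ∈ Finset.univ.erase (0:F), (N c : ℂ) * ψ c = (N 1 : ℂ) * ψ c := by
      intro c hc
      rw [hNc c (Finset.ne_of_mem_erase hc)]
    rw [Finset.sum_congr rfl this, ← Finset.mul_sum, herase]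
    ring
  -- the inner sum for each t
  have hinner : ∀ t : Fˣ, (∑ A : Matrix (Fin 3) (Fin 3) F,
      ψ (((t⁻¹ : Fˣ) : F) * A.det + (t : F))) = S * ψ (t : F) := by
    intro t
    rw [← Equiv.sum_comp (rowScale12 t)
      (fun A => ψ (((t⁻¹ : Fˣ) : F) * A.det + (t : F)))]
    have : ∀ A : Matrix (Fin 3) (Fin 3) F,
        ψ (((t⁻¹ : Fˣ) : F) * ((rowScale12 t) A).det + (t : F)) = ψ A.det * ψ (t : F) := by
      intro A
      have hdet : ((rowScale12 t) A).det = (t : F) * A.det := by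
        show (A.updateRow 0 ((t : F) • A 0)).det = (t : F) * A.det
        rw [Matrix.det_updateRow_smul, Matrix.updateRow_eq_self]
      rw [hdet, Units.val_inv_eq_inv_val, inv_mul_cancel_left₀ t.ne_zero,
        AddChar.map_add_eq_mul]
    rw [Finset.sum_congr rfl (fun A _ => this A), ← Finset.sum_mul, ← hS]
  -- assemble
  rw [Finset.sum_congr rfl (fun t _ => hinner t), ← Finset.mul_sum, hunits, hSval]
  -- numerics
  have hcast : ∀ a b : ℕ, b ≤ a → ((a - b : ℕ) : ℂ) = (a : ℂ) - (b : ℂ) := fun a b h =>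
    Nat.cast_sub h
  have hfibC : (q : ℂ) ^ 9 = (N 0 : ℂ) + ((q : ℂ) - 1) * (N 1 : ℂ) := by
    have := congrArg (fun n : ℕ => (n : ℂ)) (hfib.trans hsplit)
    push_cast [hcast q 1 hq1] at this
    exact this
  have hN1C : (N 1 : ℂ) = (q : ℂ) ^ 2 * (((q : ℂ) ^ 3 - 1) * ((q : ℂ) ^ 3 - (q : ℂ))) := by
    have := congrArg (fun n : ℕ => (n : ℂ)) hN1
    push_cast [hcast (q ^ 3) 1 (by nlinarith), hcast (q ^ 3) q (by nlinarith)] at this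
    exact this
  have : (N 0 : ℂ) = (q : ℂ) ^ 9 - ((q : ℂ) - 1) * (N 1 : ℂ) := by rw [hfibC]; ring
  rw [this, hN1C]
  ring
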